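/- arXiv:2105.06376 — 4 statements merged into one kernel-verified Lean document; each statement's English description precedes it below -/
import Mathlib

section
/- Let r₁, r₂ ∈ ℕ, let A be an r₁×r₁ complex unitary matrix and B an r₂×r₂ complex unitary matrix. If Tr(Aⁿ) = Tr(Bⁿ) for every integer n ≥ 1, then r₁ = r₂. -/
open Filter Topology Matrix

/-- Traces of unitary matrices are bounded by the dimension. -/
lemma trace_norm_le_of_unitary {r : ℕ} {U : Matrix (Fin r) (Fin r) ℂ}
    (hU : U ∈ Matrix.unitaryGroup (Fin r) ℂ) : ‖Matrix.trace U‖ ≤ r := by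
  calc ‖Matrix.trace U‖ ≤ ∑ i : Fin r, ‖U i i‖ := norm_sum_le _ _
    _ ≤ ∑ _i : Fin r, (1 : ℝ) := by
        exact Finset.sum_le_sum fun i _ => entry_norm_bound_of_unitary hU i i
    _ = r := by simp

instance matrixFirstCountable {m n α : Type*} [TopologicalSpace α]
    [Countable m] [Countable n] [FirstCountableTopology α] :
    FirstCountableTopology (Matrix m n α) :=
  inferInstanceAs (FirstCountableTopology (m → n → α))

/-- One inequality: if traces of all positive powers agree, `r₂ ≤ r₁`. -/
lemma rank_le_of_trace_pow_eq (r₁ r₂ : ℕ)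
    (A : Matrix.unitaryGroup (Fin r₁) ℂ) (B : Matrix.unitaryGroup (Fin r₂) ℂ)
    (h : ∀ n : ℕ, 1 ≤ n →
      Matrix.trace ((A : Matrix (Fin r₁) (Fin r₁) ℂ) ^ n) =
        Matrix.trace ((B : Matrix (Fin r₂) (Fin r₂) ℂ) ^ n)) :
    r₂ ≤ r₁ := by
  set M : Matrix (Fin r₂) (Fin r₂) ℂ := (B : Matrix (Fin r₂) (Fin r₂) ℂ) with hM
  have hMpow : ∀ n : ℕ, M ^ n ∈ Matrix.unitaryGroup (Fin r₂) ℂ := fun n => pow_mem B.2 n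
  have hApow : ∀ n : ℕ, (A : Matrix (Fin r₁) (Fin r₁) ℂ) ^ n ∈ Matrix.unitaryGroup (Fin r₁) ℂ :=
    fun n => pow_mem A.2 n
  -- the compact set containing all powers of `B`
  set K : Set (Matrix (Fin r₂) (Fin r₂) ℂ) :=
    Set.univ.pi fun _ : Fin r₂ => Set.univ.pi fun _ : Fin r₂ => Metric.closedBall (0 : ℂ) 1
    with hK
  have hKc : IsCompact K :=
    isCompact_univ_pi fun _ => isCompact_univ_pi fun _ => isCompact_closedBall _ _
  have hmem : ∀ n : ℕ, M ^ (n + 1) ∈ K := by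
    intro n
    rw [hK]
    intro i _
    intro j _
    simpa [Complex.dist_eq] using entry_norm_bound_of_unitary (hMpow (n + 1)) i j
  -- extract a convergent subsequence of powers
  obtain ⟨L, -, φ, hφ, hconv⟩ :=
    hKc.tendsto_subseq (x := fun n : ℕ => M ^ (n + 1)) hmem
  -- `L` is unitary
  have hstarL : star L * L = 1 := by
    have h1 : Tendsto (fun k : ℕ => star (M ^ (φ k + 1)) * M ^ (φ k + 1)) atTop
        (𝓝 (star L * L)) := (hconv.star.mul hconv)
    have h2 : (fun k : ℕ => star (M ^ (φ k + 1)) * M ^ (φ k + 1)) = fun _ => 1 := by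
      funext k
      exact Unitary.star_mul_self_of_mem (hMpow (φ k + 1))
    rw [h2] at h1
    exact (tendsto_nhds_unique tendsto_const_nhds h1).symm
  have hLstar : L * star L = 1 := mul_eq_one_comm.mp hstarL
  -- the gap sequence
  set g : ℕ → ℕ := fun k => φ (k + 1) - φ k with hg
  have hφlt : ∀ k, φ k < φ (k + 1) := fun k => hφ (by omega)
  have hg1 : ∀ k, 1 ≤ g k := fun k => by have := hφlt k; simp only [hg]; omega
  have hgsplit : ∀ k, M ^ (g k) = M ^ (φ (k + 1) + 1) * star (M ^ (φ k + 1)) := by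
    intro k
    have : M ^ (φ (k + 1) + 1) = M ^ (g k) * M ^ (φ k + 1) := by
      rw [← pow_add]
      congr 1
      have := hφlt k
      simp only [hg]
      omega
    rw [this, mul_assoc, Unitary.mul_star_self_of_mem (hMpow (φ k + 1)), mul_one]
  -- `M ^ g k → 1`
  have htend : Tendsto (fun k : ℕ => M ^ (g k)) atTop (𝓝 (1 : Matrix (Fin r₂) (Fin r₂) ℂ)) := by
    have h1 : Tendsto (fun k : ℕ => M ^ (φ (k + 1) + 1)) atTop (𝓝 L) :=
      hconv.comp (tendsto_add_atTop_nat 1)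
    have h2 : Tendsto (fun k : ℕ => M ^ (φ (k + 1) + 1) * star (M ^ (φ k + 1))) atTop
        (𝓝 (L * star L)) := h1.mul hconv.star
    rw [hLstar] at h2
    exact h2.congr fun k => (hgsplit k).symm
  -- traces converge to `r₂`
  have htr : Tendsto (fun k : ℕ => Matrix.trace (M ^ (g k))) atTop (𝓝 ((r₂ : ℂ))) := by
    have hc : Continuous fun N : Matrix (Fin r₂) (Fin r₂) ℂ => Matrix.trace N :=
      Continuous.matrix_trace continuous_id
    have := (hc.tendsto (1 : Matrix (Fin r₂) (Fin r₂) ℂ)).comp htend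
    simpa [Matrix.trace_one, Function.comp_def] using this
  have hnorm : Tendsto (fun k : ℕ => ‖Matrix.trace (M ^ (g k))‖) atTop (𝓝 ‖((r₂ : ℂ))‖) :=
    htr.norm
  have hbound : ∀ k : ℕ, ‖Matrix.trace (M ^ (g k))‖ ≤ (r₁ : ℝ) := by
    intro k
    rw [← h (g k) (hg1 k)]
    exact trace_norm_le_of_unitary (hApow (g k))
  have : ‖((r₂ : ℂ))‖ ≤ (r₁ : ℝ) :=
    le_of_tendsto hnorm (Eventually.of_forall hbound)
  have : (r₂ : ℝ) ≤ (r₁ : ℝ) := by simpa using this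
  exact_mod_cast this

/-- If two complex unitary matrices (of possibly different sizes `r₁`, `r₂`) have equal traces
of all their positive powers, then `r₁ = r₂`. -/
theorem rank_eq_of_trace_pow_eq (r₁ r₂ : ℕ)
    (A : Matrix.unitaryGroup (Fin r₁) ℂ) (B : Matrix.unitaryGroup (Fin r₂) ℂ)
    (h : ∀ n : ℕ, 1 ≤ n →
      Matrix.trace ((A : Matrix (Fin r₁) (Fin r₁) ℂ) ^ n) =
        Matrix.trace ((B : Matrix (Fin r₂) (Fin r₂) ℂ) ^ n)) :
    r₁ = r₂ := by
  exact le_antisymm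
    (rank_le_of_trace_pow_eq r₂ r₁ B A fun n hn => (h n hn).symm)
    (rank_le_of_trace_pow_eq r₁ r₂ A B h)
end

section
/- Let G be a monoid and let ρ₁, ρ₂ : G → U(r) be monoid homomorphisms into the group U(r) of r×r complex unitary matrices such that Tr ρ₁(g) = Tr ρ₂(g) for every g ∈ G. Then the two representations are unitarily equivalent: there exists a unitary matrix p ∈ U(r) such that ρ₁(g) = p · ρ₂(g) · p⁻¹ for all g ∈ G. -/
open Matrix Polynomial

set_option linter.unusedSectionVars false
set_option linter.unusedVariables false
set_option maxHeartbeats 2000000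

noncomputable section

variable {n : Type*} [Fintype n] [DecidableEq n]

def toE : (Matrix n n ℂ × Matrix n n ℂ) ≃ₗ[ℂ] EuclideanSpace ℂ ((n × n) ⊕ (n × n)) where
  toFun x := WithLp.toLp 2 (fun i => Sum.elim (fun p : n × n => x.1 p.1 p.2) (fun p : n × n => x.2 p.1 p.2) i)
  invFun v := (Matrix.of fun i j => v (Sum.inl (i, j)), Matrix.of fun i j => v (Sum.inr (i, j)))
  map_add' x y := by ext i; cases i <;> rfl
  map_smul' c x := by ext i; cases i <;> rfl
  left_inv x := rfl
  right_inv v := by ext i; cases i <;> rfl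

lemma toE_inner (x y : Matrix n n ℂ × Matrix n n ℂ) :
    (inner ℂ (toE x) (toE y) : ℂ) =
      Matrix.trace (x.1ᴴ * y.1) + Matrix.trace (x.2ᴴ * y.2) := by
  rw [PiLp.inner_apply]
  rw [Fintype.sum_sum_type]
  have h1 : ∀ (a b : Matrix n n ℂ), Matrix.trace (aᴴ * b)
      = ∑ p : n × n, (starRingEnd ℂ) (a p.1 p.2) * b p.1 p.2 := by
    intro a b
    rw [Matrix.trace, Fintype.sum_prod_type]
    rw [Finset.sum_comm]
    simp only [Matrix.diag_apply, Matrix.mul_apply, Matrix.conjTranspose_apply]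
    congr 1
  rw [h1, h1]
  simp only [RCLike.inner_apply', toE]
  rfl

lemma star_mem_of_unitary_pair {u : Matrix n n ℂ × Matrix n n ℂ}
    (hu1 : star u * u = 1)
    {A : Subalgebra ℂ (Matrix n n ℂ × Matrix n n ℂ)} (hu : u ∈ A) :
    star u ∈ A := by
  set p : ℂ[X] := u.1.charpoly * u.2.charpoly with hp
  have hdet1 : u.1.det ≠ 0 := by
    have h1 : u.1ᴴ * u.1 = 1 := congrArg Prod.fst hu1
    intro h0
    have := congrArg Matrix.det h1
    rw [Matrix.det_mul, h0, mul_zero, Matrix.det_one] at this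
    exact zero_ne_one this
  have hdet2 : u.2.det ≠ 0 := by
    have h1 : u.2ᴴ * u.2 = 1 := congrArg Prod.snd hu1
    intro h0
    have := congrArg Matrix.det h1
    rw [Matrix.det_mul, h0, mul_zero, Matrix.det_one] at this
    exact zero_ne_one this
  have hc1 : u.1.charpoly.coeff 0 ≠ 0 := by
    intro h0
    apply hdet1
    rw [Matrix.det_eq_sign_charpoly_coeff, h0, mul_zero]
  have hc2 : u.2.charpoly.coeff 0 ≠ 0 := by
    intro h0
    apply hdet2
    rw [Matrix.det_eq_sign_charpoly_coeff, h0, mul_zero]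
  have hc : p.coeff 0 ≠ 0 := by
    rw [hp, Polynomial.mul_coeff_zero]
    exact mul_ne_zero hc1 hc2
  have hkill : Polynomial.aeval u p = 0 := by
    have e1 : (Polynomial.aeval u p).1 = 0 := by
      have h₀ : (Polynomial.aeval u p).1 = Polynomial.aeval u.1 p :=
        (Polynomial.aeval_algHom_apply
          (AlgHom.fst ℂ (Matrix n n ℂ) (Matrix n n ℂ)) u p).symm
      rw [h₀, hp, _root_.map_mul, Matrix.aeval_self_charpoly, zero_mul]
    have e2 : (Polynomial.aeval u p).2 = 0 := by
      have h₀ : (Polynomial.aeval u p).2 = Polynomial.aeval u.2 p :=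
        (Polynomial.aeval_algHom_apply
          (AlgHom.snd ℂ (Matrix n n ℂ) (Matrix n n ℂ)) u p).symm
      rw [h₀, hp, _root_.map_mul, Matrix.aeval_self_charpoly, mul_zero]
    exact Prod.ext e1 e2
  set w := Polynomial.aeval u p.divX with hw
  set c := p.coeff 0 with hcdef
  have key : u * w + c • 1 = 0 := by
    have := congrArg (Polynomial.aeval u) (Polynomial.X_mul_divX_add p)
    rw [map_add, _root_.map_mul, Polynomial.aeval_X, Polynomial.aeval_C, hkill] at this
    rw [← this, hw]
    congr 1
    rw [Algebra.algebraMap_eq_smul_one]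
  set v := (-c⁻¹) • w with hv
  have huv : u * v = 1 := by
    rw [hv, Algebra.mul_smul_comm]
    have : u * w = -(c • 1) := by linear_combination (norm := module) key
    rw [this, smul_neg, neg_smul, neg_neg, smul_smul, inv_mul_cancel₀ hc, one_smul]
  have hvmem : v ∈ A := by
    apply Subalgebra.smul_mem
    have : w ∈ Algebra.adjoin ℂ ({u} : Set _) := Polynomial.aeval_mem_adjoin_singleton ℂ u
    exact Algebra.adjoin_le (Set.singleton_subset_iff.2 hu) this
  have : star u = v := by
    calc star u = star u * (u * v) := by rw [huv, mul_one]
    _ = (star u * u) * v := by rw [mul_assoc]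
    _ = v := by rw [hu1, one_mul]
  rw [this]; exact hvmem

lemma entry_helper (A B : Matrix n n ℂ) (p q : n) :
    (A * Matrix.single p q (1:ℂ) * B) p q = A p p * B q q := by
  rw [Matrix.mul_apply]
  have hE : ∀ s t, Matrix.single p q (1:ℂ) s t = if p = s ∧ q = t then 1 else 0 :=
    fun s t => rfl
  have h1 : ∀ t, (A * Matrix.single p q (1:ℂ)) p t
      = if t = q then A p p else 0 := by
    intro t
    rw [Matrix.mul_apply]
    by_cases ht : t = q
    · subst ht
      simp only [if_true]
      rw [Finset.sum_eq_single p]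
      · rw [hE, if_pos ⟨rfl, rfl⟩, mul_one]
      · intro s _ hs; rw [hE, if_neg (by rintro ⟨rfl, -⟩; exact hs rfl), mul_zero]
      · intro hp; exact absurd (Finset.mem_univ p) hp
    · simp only [ht, if_false]
      refine Finset.sum_eq_zero fun s _ => ?_
      rw [hE, if_neg (by rintro ⟨-, rfl⟩; exact ht rfl), mul_zero]
  simp only [h1, ite_mul, zero_mul]
  rw [Finset.sum_ite_eq' Finset.univ q (fun t => A p p * B t q)]
  simp

section main

variable {G : Type*} [Monoid G] [Nonempty n]
variable (ρ₁ ρ₂ : G →* Matrix.unitaryGroup n ℂ)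

/-- The pair representation as a monoid hom into the product ring. -/
def pairRep : G →* (Matrix n n ℂ × Matrix n n ℂ) where
  toFun g := ((ρ₁ g : Matrix n n ℂ), (ρ₂ g : Matrix n n ℂ))
  map_one' := by simp
  map_mul' g h := by simp [Prod.mul_def]

lemma exists_intertwiner
    (h : ∀ g, Matrix.trace ((ρ₁ g : Matrix n n ℂ)) = Matrix.trace ((ρ₂ g : Matrix n n ℂ))) :
    ∃ T : Matrix n n ℂ, T ≠ 0 ∧ (∀ g, (ρ₁ g : Matrix n n ℂ) * T = T * (ρ₂ g : Matrix n n ℂ))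
      ∧ (∀ g, Tᴴ * (ρ₁ g : Matrix n n ℂ) = (ρ₂ g : Matrix n n ℂ) * Tᴴ) := by
  classical
  set φ := pairRep ρ₁ ρ₂ with hφ
  set A : Subalgebra ℂ (Matrix n n ℂ × Matrix n n ℂ) := Algebra.adjoin ℂ (Set.range φ) with hA
  have hφ_star : ∀ g, star (φ g) ∈ A := by
    intro g
    apply star_mem_of_unitary_pair
    · refine Prod.ext ?_ ?_
      · exact Matrix.UnitaryGroup.star_mul_self (ρ₁ g)
      · exact Matrix.UnitaryGroup.star_mul_self (ρ₂ g)
    · exact Algebra.subset_adjoin ⟨g, rfl⟩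
  -- star-closedness of A
  have hstar : ∀ x ∈ A, star x ∈ A := by
    intro x hx
    induction hx using Algebra.adjoin_induction with
    | mem x hx => obtain ⟨g, rfl⟩ := hx; exact hφ_star g
    | algebraMap c =>
        rw [Algebra.algebraMap_eq_smul_one, star_smul, star_one]
        exact Subalgebra.smul_mem _ (Subalgebra.one_mem _) _
    | add x y hx hy ihx ihy => rw [star_add]; exact Subalgebra.add_mem _ ihx ihy
    | mul x y hx hy ihx ihy => rw [StarMul.star_mul]; exact Subalgebra.mul_mem _ ihy ihx
  -- A is the span of the range of φ
  have hspan : (Subalgebra.toSubmodule A : Submodule ℂ _) = Submodule.span ℂ (Set.range φ) := by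
    rw [hA, Algebra.adjoin_eq_span]
    congr 1
    have : Submonoid.closure (Set.range φ) = MonoidHom.mrange φ := by
      apply le_antisymm
      · rw [Submonoid.closure_le]; rintro x ⟨g, rfl⟩; exact ⟨g, rfl⟩
      · rintro x ⟨g, rfl⟩; exact Submonoid.subset_closure ⟨g, rfl⟩
    rw [this]; rfl
  -- traces agree on A
  have htrA : ∀ x ∈ A, Matrix.trace (x.1 : Matrix n n ℂ) = Matrix.trace x.2 := by
    set τ : (Matrix n n ℂ × Matrix n n ℂ) →ₗ[ℂ] ℂ :=
      (Matrix.traceLinearMap n ℂ ℂ).comp (LinearMap.fst ℂ _ _) -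
        (Matrix.traceLinearMap n ℂ ℂ).comp (LinearMap.snd ℂ _ _) with hτ
    have hker : Submodule.span ℂ (Set.range φ) ≤ LinearMap.ker τ := by
      rw [Submodule.span_le]
      rintro x ⟨g, rfl⟩
      simp only [SetLike.mem_coe, LinearMap.mem_ker, hτ, LinearMap.sub_apply,
        LinearMap.comp_apply, LinearMap.fst_apply, LinearMap.snd_apply,
        Matrix.traceLinearMap_apply, sub_eq_zero]
      exact h g
    intro x hx
    have hx' : x ∈ Submodule.span ℂ (Set.range φ) := by rw [← hspan]; exact hx
    have := hker hx'
    simpa only [LinearMap.mem_ker, hτ, LinearMap.sub_apply, LinearMap.comp_apply,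
      LinearMap.fst_apply, LinearMap.snd_apply, Matrix.traceLinearMap_apply,
      sub_eq_zero] using this
  -- orthonormal basis of A as a Euclidean subspace
  set A' : Submodule ℂ (EuclideanSpace ℂ ((n × n) ⊕ (n × n))) :=
    (Subalgebra.toSubmodule A).map ((toE (n := n) : _ ≃ₗ[ℂ] _) : _ →ₗ[ℂ] _) with hA'
  set d := Module.finrank ℂ A' with hd
  set bE := stdOrthonormalBasis ℂ A' with hbE
  set a : Fin d → (Matrix n n ℂ × Matrix n n ℂ) := fun k => toE.symm (bE k : _) with ha
  have ha_mem : ∀ k, a k ∈ A := by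
    intro k
    obtain ⟨x, hx, hx'⟩ := Submodule.mem_map.1 (bE k).2
    have : a k = x := by rw [ha]; simp only [← hx']; exact toE.symm_apply_apply x
    rw [this]; exact hx
  have ha_toE : ∀ k, toE (a k) = (bE k : EuclideanSpace ℂ _) := by
    intro k; rw [ha]; exact toE.apply_symm_apply _
  -- expansion of elements of A
  have hexp : ∀ x ∈ A, x = ∑ k, (inner ℂ (toE (a k)) (toE x) : ℂ) • a k := by
    intro x hx
    have hxA' : toE x ∈ A' := ⟨x, hx, rfl⟩
    set x' : A' := ⟨toE x, hxA'⟩ with hx'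
    have := bE.sum_repr x'
    have hrepr : ∀ k, bE.repr x' k = (inner ℂ (toE (a k)) (toE x) : ℂ) := by
      intro k
      rw [bE.repr_apply_apply, Submodule.coe_inner, ha_toE]
    calc x = toE.symm (x' : EuclideanSpace ℂ _) := by rw [hx']; exact (toE.symm_apply_apply x).symm
    _ = toE.symm ((∑ k, bE.repr x' k • bE k : A') : EuclideanSpace ℂ _) := by rw [this]
    _ = ∑ k, (inner ℂ (toE (a k)) (toE x) : ℂ) • a k := by
        rw [Submodule.coe_sum]
        rw [map_sum]
        refine Finset.sum_congr rfl fun k _ => ?_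
        rw [Submodule.coe_smul, LinearEquiv.map_smul, hrepr]
  -- the intertwining map
  set Tmap : Matrix n n ℂ → Matrix n n ℂ :=
    fun X => ∑ k, (a k).1 * X * ((a k).2)ᴴ with hTmap
  -- key commutation identity
  have hcomm : ∀ b ∈ A, ∀ X, b.1 * Tmap X = Tmap X * b.2 := by
    intro b hb X
    have hstarb : star b ∈ A := hstar b hb
    -- coefficients
    have hL : b.1 * Tmap X =
        ∑ k, ∑ j, (inner ℂ (toE (a j)) (toE (b * a k)) : ℂ) • ((a j).1 * X * ((a k).2)ᴴ) := by
      rw [hTmap, Finset.mul_sum]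
      refine Finset.sum_congr rfl fun k _ => ?_
      have hbk : b * a k ∈ A := Subalgebra.mul_mem _ hb (ha_mem k)
      have := hexp _ hbk
      have h1 : (b * a k).1 = ∑ j, (inner ℂ (toE (a j)) (toE (b * a k)) : ℂ) • (a j).1 := by
        conv_lhs => rw [this]
        simp [Prod.fst_sum]
      calc b.1 * ((a k).1 * X * ((a k).2)ᴴ) = (b.1 * (a k).1) * X * ((a k).2)ᴴ := by
            rw [← Matrix.mul_assoc, ← Matrix.mul_assoc]
      _ = (b * a k).1 * X * ((a k).2)ᴴ := rfl
      _ = (∑ j, (inner ℂ (toE (a j)) (toE (b * a k)) : ℂ) • (a j).1) * X * ((a k).2)ᴴ := by rw [h1]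
      _ = ∑ j, (inner ℂ (toE (a j)) (toE (b * a k)) : ℂ) • ((a j).1 * X * ((a k).2)ᴴ) := by
            rw [Finset.sum_mul, Finset.sum_mul]
            refine Finset.sum_congr rfl fun j _ => ?_
            rw [Matrix.smul_mul, Matrix.smul_mul]
    have hR : Tmap X * b.2 =
        ∑ j, ∑ k, (starRingEnd ℂ) (inner ℂ (toE (a k)) (toE (star b * a j)) : ℂ) •
          ((a j).1 * X * ((a k).2)ᴴ) := by
      rw [hTmap, Finset.sum_mul]
      refine Finset.sum_congr rfl fun j _ => ?_
      have hbj : star b * a j ∈ A := Subalgebra.mul_mem _ hstarb (ha_mem j)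
      have h2 : ((a j).2)ᴴ * b.2 = ((star b * a j).2)ᴴ := by
        have : (star b * a j).2 = (star b).2 * (a j).2 := rfl
        rw [this]
        have : (star b).2 = (b.2)ᴴ := rfl
        rw [this, Matrix.conjTranspose_mul, Matrix.conjTranspose_conjTranspose]
      have h3 : ((star b * a j).2)ᴴ =
          ∑ k, (starRingEnd ℂ) (inner ℂ (toE (a k)) (toE (star b * a j)) : ℂ) • ((a k).2)ᴴ := by
        conv_lhs => rw [hexp _ hbj]
        rw [Prod.snd_sum, Matrix.conjTranspose_sum]
        refine Finset.sum_congr rfl fun k _ => ?_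
        rw [Prod.smul_snd, Matrix.conjTranspose_smul]
        rfl
      calc (a j).1 * X * ((a j).2)ᴴ * b.2 = (a j).1 * X * (((a j).2)ᴴ * b.2) := by
            rw [Matrix.mul_assoc]
      _ = (a j).1 * X * ((star b * a j).2)ᴴ := by rw [h2]
      _ = ∑ k, (starRingEnd ℂ) (inner ℂ (toE (a k)) (toE (star b * a j)) : ℂ) •
            ((a j).1 * X * ((a k).2)ᴴ) := by
            rw [h3, Finset.mul_sum]
            refine Finset.sum_congr rfl fun k _ => ?_
            rw [Matrix.mul_smul]
    rw [hL, hR, Finset.sum_comm]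
    refine Finset.sum_congr rfl fun j _ => Finset.sum_congr rfl fun k _ => ?_
    congr 1
    -- coefficient identity
    have : (starRingEnd ℂ) (inner ℂ (toE (a k)) (toE (star b * a j)) : ℂ) =
        (inner ℂ (toE (star b * a j)) (toE (a k)) : ℂ) := by
      rw [inner_conj_symm]
    rw [this, toE_inner, toE_inner]
    have e1 : (star b * a j).1 = (b.1)ᴴ * (a j).1 := rfl
    have e2 : (star b * a j).2 = (b.2)ᴴ * (a j).2 := rfl
    have f1 : (b * a k).1 = b.1 * (a k).1 := rfl
    have f2 : (b * a k).2 = b.2 * (a k).2 := rfl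
    rw [e1, e2, f1, f2]
    simp only [Matrix.conjTranspose_mul, Matrix.conjTranspose_conjTranspose, Matrix.mul_assoc]
  -- nonvanishing
  have hnonzero : ∃ X, Tmap X ≠ 0 := by
    by_contra h0
    push_neg at h0
    -- the scalar sum
    have hSzero : ∑ k, Matrix.trace ((a k).1) * (starRingEnd ℂ) (Matrix.trace ((a k).1)) = 0 := by
      have hterm : ∀ k, Matrix.trace ((a k).1) * (starRingEnd ℂ) (Matrix.trace ((a k).1))
          = Matrix.trace ((a k).1) * Matrix.trace (((a k).2)ᴴ) := by
        intro k
        congr 1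
        rw [Matrix.trace_conjTranspose, ← htrA _ (ha_mem k)]
        rfl
      calc ∑ k, Matrix.trace ((a k).1) * (starRingEnd ℂ) (Matrix.trace ((a k).1))
          = ∑ k, Matrix.trace ((a k).1) * Matrix.trace (((a k).2)ᴴ) := by
            exact Finset.sum_congr rfl fun k _ => hterm k
      _ = ∑ k, ∑ p : n, ∑ q : n, ((a k).1 * Matrix.single p q (1:ℂ) * ((a k).2)ᴴ) p q := by
            refine Finset.sum_congr rfl fun k _ => ?_
            rw [Matrix.trace, Matrix.trace]
            rw [Finset.sum_mul]
            refine Finset.sum_congr rfl fun p _ => ?_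
            rw [Finset.mul_sum]
            refine Finset.sum_congr rfl fun q _ => ?_
            -- entry computation
            have hentry : ((a k).1 * Matrix.single p q (1:ℂ) * ((a k).2)ᴴ) p q
                = (a k).1 p p * ((a k).2)ᴴ q q := entry_helper _ _ p q
            rw [hentry]; rfl
      _ = ∑ p : n, ∑ q : n, (∑ k, (a k).1 * Matrix.single p q (1:ℂ) * ((a k).2)ᴴ) p q := by
            rw [Finset.sum_comm]
            refine Finset.sum_congr rfl fun p _ => ?_
            rw [Finset.sum_comm]
            refine Finset.sum_congr rfl fun q _ => ?_
            rw [Matrix.sum_apply]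
      _ = 0 := by
            refine Finset.sum_eq_zero fun p _ => Finset.sum_eq_zero fun q _ => ?_
            have hz := h0 (Matrix.single p q (1:ℂ))
            show (Tmap (Matrix.single p q (1:ℂ))) p q = 0
            rw [hz]
            rfl
    -- deduce all traces vanish
    have htr0 : ∀ k, Matrix.trace ((a k).1) = 0 := by
      have : ∀ k ∈ Finset.univ, Matrix.trace ((a k).1) * (starRingEnd ℂ) (Matrix.trace ((a k).1))
          = (Complex.normSq (Matrix.trace ((a k).1)) : ℂ) := by
        intro k _; exact Complex.mul_conj _
      rw [Finset.sum_congr rfl this] at hSzero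
      rw [← Complex.ofReal_sum] at hSzero
      have hreal : ∑ k, Complex.normSq (Matrix.trace ((a k).1)) = 0 := by
        exact_mod_cast hSzero
      intro k
      have hk := (Finset.sum_eq_zero_iff_of_nonneg
        (fun k _ => Complex.normSq_nonneg _)).1 hreal k (Finset.mem_univ k)
      exact Complex.normSq_eq_zero.1 hk
    -- contradiction with trace of 1
    have h1A : (1 : Matrix n n ℂ × Matrix n n ℂ) ∈ A := Subalgebra.one_mem _
    have := hexp 1 h1A
    have htr1 : Matrix.trace ((1 : Matrix n n ℂ × Matrix n n ℂ).1) = 0 := by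
      conv_lhs => rw [this]
      rw [Prod.fst_sum]
      rw [Matrix.trace_sum]
      refine Finset.sum_eq_zero fun k _ => ?_
      rw [Prod.smul_fst, Matrix.trace_smul, htr0, smul_zero]
    have htr1' : Matrix.trace ((1 : Matrix n n ℂ)) = 0 := htr1
    rw [Matrix.trace_one] at htr1'
    rename' htr1' => htr1
    have : (Fintype.card n : ℂ) ≠ 0 := by
      simp [Fintype.card_ne_zero]
    exact this htr1
  obtain ⟨X, hX⟩ := hnonzero
  refine ⟨Tmap X, hX, ?_, ?_⟩
  · intro g
    have := hcomm (φ g) (Algebra.subset_adjoin ⟨g, rfl⟩) X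
    exact this
  · intro g
    have hsg : star (φ g) ∈ A := hφ_star g
    have := hcomm _ hsg X
    have h1 : ((ρ₁ g : Matrix n n ℂ))ᴴ * Tmap X = Tmap X * ((ρ₂ g : Matrix n n ℂ))ᴴ := this
    calc (Tmap X)ᴴ * (ρ₁ g : Matrix n n ℂ)
        = (((ρ₁ g : Matrix n n ℂ))ᴴ * Tmap X)ᴴ := by
          rw [Matrix.conjTranspose_mul, Matrix.conjTranspose_conjTranspose]
    _ = (Tmap X * ((ρ₂ g : Matrix n n ℂ))ᴴ)ᴴ := by rw [h1]
    _ = (ρ₂ g : Matrix n n ℂ) * (Tmap X)ᴴ := by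
          rw [Matrix.conjTranspose_mul, Matrix.conjTranspose_conjTranspose]

end main
end

noncomputable section

variable {n : Type*} [Fintype n] [DecidableEq n]

/-- matrix-vector multiplication on Euclidean space -/
def mulVecE (M : Matrix n n ℂ) (v : EuclideanSpace ℂ n) : EuclideanSpace ℂ n :=
  (WithLp.equiv 2 _).symm (M *ᵥ (WithLp.equiv 2 (n → ℂ) v))

infixr:73 " ⊚ " => mulVecE

lemma mulVecE_apply (M : Matrix n n ℂ) (v : EuclideanSpace ℂ n) (i : n) :
    (M ⊚ v) i = ∑ j, M i j * v j := rfl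

lemma mulVecE_mulVecE (M N : Matrix n n ℂ) (v : EuclideanSpace ℂ n) :
    M ⊚ (N ⊚ v) = (M * N) ⊚ v := by
  show (WithLp.equiv 2 _).symm (M *ᵥ (N *ᵥ _)) = _
  rw [Matrix.mulVec_mulVec]
  rfl

lemma mulVecE_add (M : Matrix n n ℂ) (v w : EuclideanSpace ℂ n) :
    M ⊚ (v + w) = M ⊚ v + M ⊚ w := by
  show (WithLp.equiv 2 _).symm (M *ᵥ (_ + _)) = _
  rw [Matrix.mulVec_add]
  rfl

lemma mulVecE_smul (M : Matrix n n ℂ) (c : ℂ) (v : EuclideanSpace ℂ n) :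
    M ⊚ (c • v) = c • (M ⊚ v) := by
  show (WithLp.equiv 2 _).symm (M *ᵥ (c • _)) = _
  rw [Matrix.mulVec_smul]
  rfl

lemma mulVecE_zero (M : Matrix n n ℂ) : M ⊚ (0 : EuclideanSpace ℂ n) = 0 := by
  show (WithLp.equiv 2 _).symm (M *ᵥ 0) = _
  rw [Matrix.mulVec_zero]
  rfl

lemma one_mulVecE (v : EuclideanSpace ℂ n) : (1 : Matrix n n ℂ) ⊚ v = v := by
  show (WithLp.equiv 2 _).symm ((1 : Matrix n n ℂ) *ᵥ _) = _
  rw [Matrix.one_mulVec]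
  rfl

lemma inner_mulVecE_right (M : Matrix n n ℂ) (x y : EuclideanSpace ℂ n) :
    (inner ℂ x (M ⊚ y) : ℂ) = inner ℂ (Mᴴ ⊚ x) y := by
  rw [PiLp.inner_apply, PiLp.inner_apply]
  simp only [RCLike.inner_apply']
  have l : ∀ i : n, (starRingEnd ℂ) (x i) * (M ⊚ y) i
      = ∑ j, (starRingEnd ℂ) (x i) * (M i j * y j) := by
    intro i
    rw [mulVecE_apply, Finset.mul_sum]
  have r : ∀ j : n, (starRingEnd ℂ) ((Mᴴ ⊚ x) j) * y j
      = ∑ i, ((starRingEnd ℂ) (x i) * (M i j * y j)) := by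
    intro j
    rw [mulVecE_apply, map_sum, Finset.sum_mul]
    refine Finset.sum_congr rfl fun i _ => ?_
    rw [Matrix.conjTranspose_apply]
    simp only [RCLike.star_def, _root_.map_mul, Complex.conj_conj]
    ring
  simp only [l, r]
  exact Finset.sum_comm

lemma inner_mulVecE_left (M : Matrix n n ℂ) (x y : EuclideanSpace ℂ n) :
    (inner ℂ (M ⊚ x) y : ℂ) = inner ℂ x (Mᴴ ⊚ y) := by
  rw [inner_mulVecE_right, Matrix.conjTranspose_conjTranspose]

/-- a matrix whose columns form an orthonormal family (with index of the right cardinality)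
is "unitary": both products with its conjugate transpose are 1. -/
lemma columns_unitary {κ : Type*} [Fintype κ] [DecidableEq κ]
    (v : κ → EuclideanSpace ℂ n) (hv : Orthonormal ℂ v)
    (hcard : Fintype.card κ = Fintype.card n) :
    ((Matrix.of fun i j => v j i)ᴴ * (Matrix.of fun i j => v j i) = 1)
    ∧ ((Matrix.of fun i j => v j i) * (Matrix.of fun i j => v j i)ᴴ = 1) := by
  set U : Matrix n κ ℂ := Matrix.of fun i j => v j i with hU
  have h1 : Uᴴ * U = 1 := by
    ext j j'
    rw [Matrix.mul_apply, Matrix.one_apply]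
    have h2 : ∑ i, Uᴴ j i * U i j' = (inner ℂ (v j) (v j') : ℂ) := by
      rw [PiLp.inner_apply]
      refine Finset.sum_congr rfl fun i _ => ?_
      rw [Matrix.conjTranspose_apply, RCLike.inner_apply']
      rfl
    rw [h2, orthonormal_iff_ite.1 hv]
  refine ⟨h1, ?_⟩
  obtain ⟨σ⟩ : Nonempty (κ ≃ n) := ⟨Fintype.equivOfCardEq hcard⟩
  set V : Matrix n n ℂ := U.submatrix id σ.symm with hV
  have hVV : Vᴴ * V = 1 := by
    have e1 : Vᴴ = Uᴴ.submatrix σ.symm id := by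
      ext i j; rfl
    rw [hV, e1]
    have e2 : Uᴴ.submatrix σ.symm id * U.submatrix id σ.symm
        = (Uᴴ * U).submatrix σ.symm σ.symm :=
      Matrix.submatrix_mul Uᴴ U σ.symm id σ.symm Function.bijective_id
    rw [e2, h1]
    exact Matrix.submatrix_one_equiv σ.symm
  have hVV' : V * Vᴴ = 1 := mul_eq_one_comm.1 hVV
  have e3 : U * Uᴴ = V * Vᴴ := by
    ext i i'
    rw [Matrix.mul_apply, Matrix.mul_apply]
    rw [← Equiv.sum_comp σ.symm (fun t => U i t * Uᴴ t i')]
    rfl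
  rw [e3, hVV']

/-- entries of a conjugated matrix in terms of inner ℂ products of columns -/
lemma conj_entry {κ : Type*} [Fintype κ] (v : κ → EuclideanSpace ℂ n)
    (M : Matrix n n ℂ) (j j' : κ) :
    ((Matrix.of fun i j => v j i)ᴴ * M * (Matrix.of fun i j => v j i)) j j'
      = (inner ℂ (v j) (M ⊚ (v j')) : ℂ) := by
  set U : Matrix n κ ℂ := Matrix.of fun i j => v j i with hU
  rw [Matrix.mul_apply, PiLp.inner_apply]
  have key : ∀ i, (Uᴴ * M) j i * U i j'
      = ∑ t, (starRingEnd ℂ) (v j t) * (M t i * v j' i) := by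
    intro i
    rw [Matrix.mul_apply, Finset.sum_mul]
    refine Finset.sum_congr rfl fun t _ => ?_
    rw [Matrix.conjTranspose_apply]
    have h1 : U t j = v j t := rfl
    have h2 : U i j' = v j' i := rfl
    rw [h1, h2]
    simp only [RCLike.star_def]
    ring
  simp only [key]
  rw [Finset.sum_comm]
  refine Finset.sum_congr rfl fun t _ => ?_
  rw [RCLike.inner_apply', mulVecE_apply, Finset.mul_sum]

lemma trace_fromBlocks' {k l : Type*} [Fintype k] [Fintype l]
    (A : Matrix k k ℂ) (B : Matrix k l ℂ) (C : Matrix l k ℂ) (D : Matrix l l ℂ) :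
    Matrix.trace (Matrix.fromBlocks A B C D) = Matrix.trace A + Matrix.trace D := by
  rw [Matrix.trace, Fintype.sum_sum_type]
  rfl

end

/-! ## Main induction -/

noncomputable section induction

open scoped ComplexOrder

variable {G : Type*} [Monoid G]

theorem conj_aux :
    ∀ (N : ℕ) (n : Type) [Fintype n] [DecidableEq n], Fintype.card n ≤ N →
    ∀ (ρ₁ ρ₂ : G →* Matrix.unitaryGroup n ℂ),
    (∀ g, Matrix.trace ((ρ₁ g : Matrix n n ℂ)) = Matrix.trace ((ρ₂ g : Matrix n n ℂ))) →
    ∃ p : Matrix n n ℂ, p ∈ Matrix.unitaryGroup n ℂ ∧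
      ∀ g, (ρ₁ g : Matrix n n ℂ) = p * (ρ₂ g : Matrix n n ℂ) * star p := by
  intro N
  induction N with
  | zero =>
      intro n _ _ hcard ρ₁ ρ₂ h
      haveI : IsEmpty n := Fintype.card_eq_zero_iff.1 (Nat.le_zero.1 hcard)
      refine ⟨1, Submonoid.one_mem _, fun g => ?_⟩
      exact Matrix.ext fun i j => isEmptyElim i
  | succ N ih =>
      intro n _ _ hcard ρ₁ ρ₂ h
      by_cases hle : Fintype.card n ≤ N
      · exact ih n hle ρ₁ ρ₂ h
      haveI hne : Nonempty n := Fintype.card_pos_iff.1 (by omega)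
      classical
      obtain ⟨T, hT0, hT1, hT2⟩ := exists_intertwiner ρ₁ ρ₂ h
      set Q : Matrix n n ℂ := Tᴴ * T with hQdef
      have hQherm : Qᴴ = Q := by
        rw [hQdef, Matrix.conjTranspose_mul, Matrix.conjTranspose_conjTranspose]
      have hQH : Q.IsHermitian := hQherm
      -- `Q ≠ 0`
      have hQ0 : Q ≠ 0 := by
        intro hQ
        apply hT0
        ext i j
        have hdiag : Q j j = 0 := by rw [hQ]; rfl
        rw [hQdef, Matrix.mul_apply] at hdiag
        have hterm : ∀ t, Tᴴ j t * T t j = (Complex.normSq (T t j) : ℂ) := by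
          intro t
          rw [Matrix.conjTranspose_apply]
          rw [RCLike.star_def, mul_comm]
          exact Complex.mul_conj _
        rw [Finset.sum_congr rfl (fun t _ => hterm t)] at hdiag
        rw [← Complex.ofReal_sum] at hdiag
        have hreal : ∑ t, Complex.normSq (T t j) = 0 := by exact_mod_cast hdiag
        have := (Finset.sum_eq_zero_iff_of_nonneg
          (fun t _ => Complex.normSq_nonneg _)).1 hreal i (Finset.mem_univ i)
        simpa using Complex.normSq_eq_zero.1 this
      -- commutation of `Q` with `ρ₂`
      have hcommQ : ∀ g, (ρ₂ g : Matrix n n ℂ) * Q = Q * (ρ₂ g : Matrix n n ℂ) := by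
        intro g
        calc (ρ₂ g : Matrix n n ℂ) * Q = ((ρ₂ g : Matrix n n ℂ) * Tᴴ) * T := by
              rw [hQdef, Matrix.mul_assoc]
        _ = (Tᴴ * (ρ₁ g : Matrix n n ℂ)) * T := by rw [hT2 g]
        _ = Tᴴ * ((ρ₁ g : Matrix n n ℂ) * T) := by rw [Matrix.mul_assoc]
        _ = Tᴴ * (T * (ρ₂ g : Matrix n n ℂ)) := by rw [hT1 g]
        _ = Q * (ρ₂ g : Matrix n n ℂ) := by rw [hQdef, Matrix.mul_assoc]
      have hcommQ' : ∀ g, (ρ₂ g : Matrix n n ℂ)ᴴ * Q = Q * (ρ₂ g : Matrix n n ℂ)ᴴ := by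
        intro g
        have h2 := congrArg Matrix.conjTranspose (hcommQ g)
        rw [Matrix.conjTranspose_mul ((ρ₂ g : Matrix n n ℂ)) Q,
          Matrix.conjTranspose_mul Q ((ρ₂ g : Matrix n n ℂ)), hQherm] at h2
        exact h2.symm
      -- a nonzero eigenvalue
      have hex : ∃ i, hQH.eigenvalues i ≠ 0 := by
        by_contra h0
        push_neg at h0
        apply hQ0
        have hdiag : Matrix.diagonal (RCLike.ofReal ∘ hQH.eigenvalues) = (0 : Matrix n n ℂ) := by
          ext i j
          by_cases hij : i = j
          · subst hij; simp [h0 i]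
          · simp [Matrix.diagonal_apply_ne _ hij]
        calc Q = _ := hQH.spectral_theorem
        _ = 0 := by rw [hdiag, map_zero]
      obtain ⟨i0, hi0⟩ := hex
      set lam : ℝ := hQH.eigenvalues i0 with hlamdef
      have hlam_nonneg : 0 ≤ lam := (Matrix.posSemidef_conjTranspose_mul_self T).eigenvalues_nonneg i0
      have hlam_pos : 0 < lam := lt_of_le_of_ne hlam_nonneg (Ne.symm hi0)
      -- the eigenspace E
      set E : Submodule ℂ (EuclideanSpace ℂ n) :=
        { carrier := {v | Q ⊚ v = ((lam : ℂ)) • v}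
          add_mem' := by
            intro v w hv hw
            show Q ⊚ (v + w) = (lam:ℂ) • (v + w)
            rw [mulVecE_add, hv, hw, smul_add]
          zero_mem' := by
            show Q ⊚ (0 : EuclideanSpace ℂ n) = (lam:ℂ) • (0 : EuclideanSpace ℂ n)
            rw [mulVecE_zero, smul_zero]
          smul_mem' := by
            intro c v hv
            show Q ⊚ (c • v) = (lam:ℂ) • (c • v)
            rw [mulVecE_smul, hv, smul_comm] } with hEdef
      have hEmem : ∀ v : EuclideanSpace ℂ n, v ∈ E ↔ Q ⊚ v = (lam:ℂ) • v := fun v => Iff.rfl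
      -- E is nontrivial
      have hv0 : (hQH.eigenvectorBasis i0 : EuclideanSpace ℂ n) ∈ E := by
        rw [hEmem]
        have hmv := hQH.mulVec_eigenvectorBasis i0
        have : Q ⊚ (hQH.eigenvectorBasis i0 : EuclideanSpace ℂ n)
            = (WithLp.equiv 2 _).symm (lam • (WithLp.equiv 2 ((i : n) → ℂ))
                (hQH.eigenvectorBasis i0)) := by
          show (WithLp.equiv 2 _).symm _ = _
          exact congrArg _ hmv
        rw [this]
        ext t
        show lam • ((hQH.eigenvectorBasis i0 : EuclideanSpace ℂ n) t) = _
        rw [PiLp.smul_apply]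
        rw [Complex.real_smul]
        rfl
      have hEne : E ≠ ⊥ := by
        intro hbot
        have : (hQH.eigenvectorBasis i0 : EuclideanSpace ℂ n) = 0 := by
          rw [hbot] at hv0
          simpa using hv0
        exact hQH.eigenvectorBasis.orthonormal.ne_zero i0 this
      -- dimensions
      set k := Module.finrank ℂ E with hkdef
      set l := Module.finrank ℂ ↥Eᗮ with hldef
      have hkl : k + l = Fintype.card n := by
        rw [hkdef, hldef, Submodule.finrank_add_finrank_orthogonal E]
        exact finrank_euclideanSpace
      have hk1 : 1 ≤ k := by
        haveI : Nontrivial ↥E := Submodule.nontrivial_iff_ne_bot.2 hEne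
        have := Module.finrank_pos (R := ℂ) (M := ↥E)
        omega
      -- orthonormal basis of E and Eᗮ
      set ebE := stdOrthonormalBasis ℂ ↥E with hebE
      set fbE := stdOrthonormalBasis ℂ ↥Eᗮ with hfbE
      set e : Fin k → EuclideanSpace ℂ n := fun a => (ebE a : EuclideanSpace ℂ n) with he
      set f : Fin l → EuclideanSpace ℂ n := fun b => (fbE b : EuclideanSpace ℂ n) with hf
      have he_mem : ∀ a, e a ∈ E := fun a => (ebE a).2
      have hf_mem : ∀ b, f b ∈ Eᗮ := fun b => (fbE b).2
      have he_on : Orthonormal ℂ e := by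
        rw [orthonormal_iff_ite]
        intro a b
        have := orthonormal_iff_ite.1 ebE.orthonormal a b
        rw [Submodule.coe_inner] at this
        exact this
      have hf_on : Orthonormal ℂ f := by
        rw [orthonormal_iff_ite]
        intro a b
        have := orthonormal_iff_ite.1 fbE.orthonormal a b
        rw [Submodule.coe_inner] at this
        exact this
      have hspanE : E = Submodule.span ℂ (Set.range e) := by
        apply le_antisymm
        · intro x hx
          have hsum := ebE.sum_repr ⟨x, hx⟩
          have : x = ∑ a, ebE.repr ⟨x, hx⟩ a • e a := by
            calc x = ((⟨x, hx⟩ : ↥E) : EuclideanSpace ℂ n) := rfl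
            _ = ((∑ a, ebE.repr ⟨x, hx⟩ a • ebE a : ↥E) : EuclideanSpace ℂ n) := by rw [hsum]
            _ = ∑ a, ebE.repr ⟨x, hx⟩ a • e a := by
                rw [Submodule.coe_sum]
                exact Finset.sum_congr rfl fun a _ => rfl
          rw [this]
          exact Submodule.sum_mem _ fun a _ => Submodule.smul_mem _ _
            (Submodule.subset_span ⟨a, rfl⟩)
        · rw [Submodule.span_le]
          rintro x ⟨a, rfl⟩
          exact he_mem a
      -- the image family
      have hTinner : ∀ (x y : EuclideanSpace ℂ n), y ∈ E →
          (inner ℂ (T ⊚ x) (T ⊚ y) : ℂ) = (lam : ℂ) * inner ℂ x y := by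
        intro x y hy
        rw [inner_mulVecE_left, mulVecE_mulVecE]
        have : Tᴴ * T = Q := rfl
        rw [this, (hEmem y).1 hy, inner_smul_right]
      set c : ℝ := Real.sqrt lam with hcdef
      have hc2 : (c : ℂ) * (c : ℂ) = (lam : ℂ) := by
        rw [← Complex.ofReal_mul, Real.mul_self_sqrt hlam_pos.le]
      have hcne : (c : ℂ) ≠ 0 := by
        simp only [ne_eq, Complex.ofReal_eq_zero]
        exact (Real.sqrt_pos.2 hlam_pos).ne'
      set w : Fin k → EuclideanSpace ℂ n := fun a => ((c : ℂ))⁻¹ • (T ⊚ e a) with hw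
      have hw_on : Orthonormal ℂ w := by
        rw [orthonormal_iff_ite]
        intro a b
        rw [hw]
        rw [inner_smul_left, inner_smul_right, hTinner _ _ (he_mem b)]
        rw [orthonormal_iff_ite.1 he_on a b]
        have hconj : (starRingEnd ℂ) ((c : ℂ))⁻¹ = ((c : ℂ))⁻¹ := by
          rw [map_inv₀, Complex.conj_ofReal]
        rw [hconj]
        by_cases hab : a = b
        · subst hab
          simp only [if_true, mul_one]
          field_simp
          rw [← hc2]; ring
        · simp [hab]
      set W : Submodule ℂ (EuclideanSpace ℂ n) := Submodule.span ℂ (Set.range w) with hWdef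
      have hw_mem : ∀ a, w a ∈ W := fun a => Submodule.subset_span ⟨a, rfl⟩
      have hTwE : ∀ a, T ⊚ e a = (c : ℂ) • w a := by
        intro a
        rw [hw, smul_smul, mul_inv_cancel₀ hcne, one_smul]
      have hTW : ∀ x ∈ E, T ⊚ x ∈ W := by
        intro x hx
        rw [hspanE] at hx
        induction hx using Submodule.span_induction with
        | mem y hy =>
            obtain ⟨a, rfl⟩ := hy
            rw [hTwE a]
            exact Submodule.smul_mem _ _ (hw_mem a)
        | zero => rw [mulVecE_zero]; exact Submodule.zero_mem _
        | add y z hy hz ihy ihz => rw [mulVecE_add]; exact Submodule.add_mem _ ihy ihz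
        | smul cc y hy ihy => rw [mulVecE_smul]; exact Submodule.smul_mem _ _ ihy
      -- invariances
      have hEinv : ∀ (M : Matrix n n ℂ), M * Q = Q * M → ∀ v ∈ E, M ⊚ v ∈ E := by
        intro M hM v hv
        rw [hEmem] at hv ⊢
        rw [mulVecE_mulVecE, ← hM, ← mulVecE_mulVecE, hv, mulVecE_smul]
      have hρ₂E : ∀ g, ∀ v ∈ E, (ρ₂ g : Matrix n n ℂ) ⊚ v ∈ E :=
        fun g => hEinv _ (hcommQ g)
      have hρ₂HE : ∀ g, ∀ v ∈ E, ((ρ₂ g : Matrix n n ℂ))ᴴ ⊚ v ∈ E :=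
        fun g => hEinv _ (hcommQ' g)
      have hEperp : ∀ g, ∀ v ∈ Eᗮ, (ρ₂ g : Matrix n n ℂ) ⊚ v ∈ Eᗮ := by
        intro g v hv
        rw [Submodule.mem_orthogonal]
        intro u hu
        rw [inner_mulVecE_right]
        exact Submodule.inner_right_of_mem_orthogonal (hρ₂HE g u hu) hv
      have hconjT : ∀ g, ((ρ₁ g : Matrix n n ℂ))ᴴ * T = T * ((ρ₂ g : Matrix n n ℂ))ᴴ := by
        intro g
        have h2 := congrArg Matrix.conjTranspose (hT2 g)
        rw [Matrix.conjTranspose_mul Tᴴ ((ρ₁ g : Matrix n n ℂ)),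
          Matrix.conjTranspose_mul ((ρ₂ g : Matrix n n ℂ)) Tᴴ,
          Matrix.conjTranspose_conjTranspose] at h2
        exact h2
      have hWinv : ∀ g, ∀ v ∈ W, (ρ₁ g : Matrix n n ℂ) ⊚ v ∈ W := by
        intro g v hv
        rw [hWdef] at hv
        induction hv using Submodule.span_induction with
        | mem y hy =>
            obtain ⟨a, rfl⟩ := hy
            rw [hw, mulVecE_smul]
            refine Submodule.smul_mem _ _ ?_
            rw [mulVecE_mulVecE, hT1 g, ← mulVecE_mulVecE]
            exact hTW _ (hρ₂E g _ (he_mem a))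
        | zero => rw [mulVecE_zero]; exact Submodule.zero_mem _
        | add y z hy hz ihy ihz => rw [mulVecE_add]; exact Submodule.add_mem _ ihy ihz
        | smul cc y hy ihy => rw [mulVecE_smul]; exact Submodule.smul_mem _ _ ihy
      have hWHinv : ∀ g, ∀ v ∈ W, ((ρ₁ g : Matrix n n ℂ))ᴴ ⊚ v ∈ W := by
        intro g v hv
        rw [hWdef] at hv
        induction hv using Submodule.span_induction with
        | mem y hy =>
            obtain ⟨a, rfl⟩ := hy
            rw [hw, mulVecE_smul]
            refine Submodule.smul_mem _ _ ?_
            rw [mulVecE_mulVecE, hconjT g, ← mulVecE_mulVecE]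
            exact hTW _ (hρ₂HE g _ (he_mem a))
        | zero => rw [mulVecE_zero]; exact Submodule.zero_mem _
        | add y z hy hz ihy ihz => rw [mulVecE_add]; exact Submodule.add_mem _ ihy ihz
        | smul cc y hy ihy => rw [mulVecE_smul]; exact Submodule.smul_mem _ _ ihy
      have hWperp : ∀ g, ∀ v ∈ Wᗮ, (ρ₁ g : Matrix n n ℂ) ⊚ v ∈ Wᗮ := by
        intro g v hv
        rw [Submodule.mem_orthogonal]
        intro u hu
        rw [inner_mulVecE_right]
        exact Submodule.inner_right_of_mem_orthogonal (hWHinv g u hu) hv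
      -- rank of W
      have hWrank : Module.finrank ℂ ↥W = k := by
        rw [hWdef]
        rw [finrank_span_eq_card hw_on.linearIndependent]
        exact Fintype.card_fin k
      have hWperp_rank : Module.finrank ℂ ↥Wᗮ = l := by
        have := Submodule.finrank_add_finrank_orthogonal W
        rw [hWrank, finrank_euclideanSpace] at this
        omega
      set gb := (stdOrthonormalBasis ℂ ↥Wᗮ).reindex (finCongr hWperp_rank) with hgb
      set gvec : Fin l → EuclideanSpace ℂ n := fun b => (gb b : EuclideanSpace ℂ n) with hgvec
      have hg_mem : ∀ b, gvec b ∈ Wᗮ := fun b => (gb b).2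
      have hg_on : Orthonormal ℂ gvec := by
        rw [orthonormal_iff_ite]
        intro a b
        have := orthonormal_iff_ite.1 gb.orthonormal a b
        rw [Submodule.coe_inner] at this
        exact this
      -- combined families
      set v₂ : Fin k ⊕ Fin l → EuclideanSpace ℂ n := Sum.elim e f with hv₂
      set v₁ : Fin k ⊕ Fin l → EuclideanSpace ℂ n := Sum.elim w gvec with hv₁
      have hcross : ∀ (x y : EuclideanSpace ℂ n) (K : Submodule ℂ (EuclideanSpace ℂ n)),
          x ∈ K → y ∈ Kᗮ → (inner ℂ x y : ℂ) = 0 ∧ (inner ℂ y x : ℂ) = 0 := by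
        intro x y K hx hy
        constructor
        · exact Submodule.inner_right_of_mem_orthogonal hx hy
        · rw [← inner_conj_symm, Submodule.inner_right_of_mem_orthogonal hx hy, map_zero]
      have ho₂ : Orthonormal ℂ v₂ := by
        rw [orthonormal_iff_ite]
        rintro (a | b) (a' | b')
        · simpa [hv₂] using orthonormal_iff_ite.1 he_on a a'
        · simpa [hv₂] using (hcross _ _ E (he_mem a) (hf_mem b')).1
        · simpa [hv₂] using (hcross _ _ E (he_mem a') (hf_mem b)).2
        · simpa [hv₂] using orthonormal_iff_ite.1 hf_on b b'
      have ho₁ : Orthonormal ℂ v₁ := by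
        rw [orthonormal_iff_ite]
        rintro (a | b) (a' | b')
        · simpa [hv₁] using orthonormal_iff_ite.1 hw_on a a'
        · simpa [hv₁] using (hcross _ _ W (hw_mem a) (hg_mem b')).1
        · simpa [hv₁] using (hcross _ _ W (hw_mem a') (hg_mem b)).2
        · simpa [hv₁] using orthonormal_iff_ite.1 hg_on b b'
      have hcards : Fintype.card (Fin k ⊕ Fin l) = Fintype.card n := by
        simp [hkl]
      set u₂ : Matrix n (Fin k ⊕ Fin l) ℂ := Matrix.of fun i j => v₂ j i with hu₂
      set u₁ : Matrix n (Fin k ⊕ Fin l) ℂ := Matrix.of fun i j => v₁ j i with hu₁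
      obtain ⟨hu₂a, hu₂b⟩ := columns_unitary v₂ ho₂ hcards
      obtain ⟨hu₁a, hu₁b⟩ := columns_unitary v₁ ho₁ hcards
      -- blocks
      set σm : G → Matrix (Fin k) (Fin k) ℂ :=
        fun g => Matrix.of fun a b => (inner ℂ (e a) ((ρ₂ g : Matrix n n ℂ) ⊚ e b) : ℂ) with hσm
      set ρb₂ : G → Matrix (Fin l) (Fin l) ℂ :=
        fun g => Matrix.of fun a b => (inner ℂ (f a) ((ρ₂ g : Matrix n n ℂ) ⊚ f b) : ℂ) with hρb₂
      set ρb₁ : G → Matrix (Fin l) (Fin l) ℂ :=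
        fun g => Matrix.of fun a b => (inner ℂ (gvec a) ((ρ₁ g : Matrix n n ℂ) ⊚ gvec b) : ℂ)
          with hρb₁
      have hblock₂ : ∀ g, u₂ᴴ * (ρ₂ g : Matrix n n ℂ) * u₂
          = Matrix.fromBlocks (σm g) 0 0 (ρb₂ g) := by
        intro g
        ext j j'
        rw [hu₂, conj_entry v₂ ((ρ₂ g : Matrix n n ℂ)) j j']
        rcases j with a | b <;> rcases j' with a' | b'
        · rfl
        · show (inner ℂ (e a) ((ρ₂ g : Matrix n n ℂ) ⊚ f b') : ℂ) = 0
          exact (hcross _ _ E (he_mem a) (hEperp g _ (hf_mem b'))).1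
        · show (inner ℂ (f b) ((ρ₂ g : Matrix n n ℂ) ⊚ e a') : ℂ) = 0
          exact (hcross _ _ E (hρ₂E g _ (he_mem a')) (hf_mem b)).2
        · rfl
      have hblock₁ : ∀ g, u₁ᴴ * (ρ₁ g : Matrix n n ℂ) * u₁
          = Matrix.fromBlocks (σm g) 0 0 (ρb₁ g) := by
        intro g
        ext j j'
        rw [hu₁, conj_entry v₁ ((ρ₁ g : Matrix n n ℂ)) j j']
        rcases j with a | b <;> rcases j' with a' | b'
        · -- the key block identity
          show (inner ℂ (w a) ((ρ₁ g : Matrix n n ℂ) ⊚ w a') : ℂ)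
            = (inner ℂ (e a) ((ρ₂ g : Matrix n n ℂ) ⊚ e a') : ℂ)
          rw [hw]
          rw [mulVecE_smul, inner_smul_left, inner_smul_right]
          rw [mulVecE_mulVecE, hT1 g, ← mulVecE_mulVecE]
          rw [hTinner _ _ (hρ₂E g _ (he_mem a'))]
          rw [map_inv₀, Complex.conj_ofReal]
          have hfin : ((c:ℂ))⁻¹ * ((c:ℂ))⁻¹ * (lam : ℂ) = 1 := by
            rw [← mul_inv, hc2]
            exact inv_mul_cancel₀ (by rw [← hc2]; exact mul_ne_zero hcne hcne)
          linear_combination (inner ℂ (e a) ((ρ₂ g : Matrix n n ℂ) ⊚ e a') : ℂ) * hfin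
        · show (inner ℂ (w a) ((ρ₁ g : Matrix n n ℂ) ⊚ gvec b') : ℂ) = 0
          exact (hcross _ _ W (hw_mem a) (hWperp g _ (hg_mem b'))).1
        · show (inner ℂ (gvec b) ((ρ₁ g : Matrix n n ℂ) ⊚ w a') : ℂ) = 0
          exact (hcross _ _ W (hWinv g _ (hw_mem a')) (hg_mem b)).2
        · rfl
      -- conjugation is multiplicative
      have hconjprod : ∀ (U : Matrix n (Fin k ⊕ Fin l) ℂ), U * Uᴴ = 1 →
          ∀ (M M' : Matrix n n ℂ), (Uᴴ * M * U) * (Uᴴ * M' * U) = Uᴴ * (M * M') * U := by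
        intro U hU M M'
        have h1 : Uᴴ * M * (U * Uᴴ) * M' * U = (Uᴴ * M * U) * (Uᴴ * M' * U) := by
          simp only [Matrix.mul_assoc]
        rw [← h1, hU, Matrix.mul_one]
        simp only [Matrix.mul_assoc]
      have hadj : ∀ (U : Matrix n (Fin k ⊕ Fin l) ℂ) (M : Matrix n n ℂ),
          Uᴴ * Mᴴ * U = (Uᴴ * M * U)ᴴ := by
        intro U M
        rw [Matrix.conjTranspose_mul (Uᴴ * M) U, Matrix.conjTranspose_mul Uᴴ M,
          Matrix.conjTranspose_conjTranspose]
        simp only [Matrix.mul_assoc]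
      -- multiplicativity of the blocks
      have hmul₂ : ∀ g g', σm (g * g') = σm g * σm g' ∧ ρb₂ (g * g') = ρb₂ g * ρb₂ g' := by
        intro g g'
        have hco : ((ρ₂ (g * g') : Matrix n n ℂ))
            = (ρ₂ g : Matrix n n ℂ) * (ρ₂ g' : Matrix n n ℂ) := by
          rw [_root_.map_mul ρ₂ g g']; rfl
        have hbig : Matrix.fromBlocks (σm (g * g')) 0 0 (ρb₂ (g * g'))
            = Matrix.fromBlocks (σm g * σm g') 0 0 (ρb₂ g * ρb₂ g') := by
          rw [← hblock₂, hco, ← hconjprod u₂ hu₂b _ _, hblock₂, hblock₂,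
            Matrix.fromBlocks_multiply]
          simp
        constructor
        · have := congrArg Matrix.toBlocks₁₁ hbig
          simpa only [Matrix.toBlocks_fromBlocks₁₁] using this
        · have := congrArg Matrix.toBlocks₂₂ hbig
          simpa only [Matrix.toBlocks_fromBlocks₂₂] using this
      have hmul₁ : ∀ g g', ρb₁ (g * g') = ρb₁ g * ρb₁ g' := by
        intro g g'
        have hco : ((ρ₁ (g * g') : Matrix n n ℂ))
            = (ρ₁ g : Matrix n n ℂ) * (ρ₁ g' : Matrix n n ℂ) := by
          rw [_root_.map_mul ρ₁ g g']; rfl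
        have hbig : Matrix.fromBlocks (σm (g * g')) 0 0 (ρb₁ (g * g'))
            = Matrix.fromBlocks (σm g * σm g') 0 0 (ρb₁ g * ρb₁ g') := by
          rw [← hblock₁, hco, ← hconjprod u₁ hu₁b _ _, hblock₁, hblock₁,
            Matrix.fromBlocks_multiply]
          simp
        have := congrArg Matrix.toBlocks₂₂ hbig
        simpa only [Matrix.toBlocks_fromBlocks₂₂] using this
      -- unitarity of the blocks
      have hmem₂ : ∀ g, ρb₂ g ∈ Matrix.unitaryGroup (Fin l) ℂ := by
        intro g
        have hbigu : (u₂ᴴ * (ρ₂ g : Matrix n n ℂ) * u₂) * (u₂ᴴ * ((ρ₂ g : Matrix n n ℂ))ᴴ * u₂)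
            = 1 := by
          rw [hconjprod u₂ hu₂b]
          have : (ρ₂ g : Matrix n n ℂ) * ((ρ₂ g : Matrix n n ℂ))ᴴ = 1 := by
            have := Matrix.mem_unitaryGroup_iff.mp (ρ₂ g).2
            rwa [Matrix.star_eq_conjTranspose] at this
          rw [this, Matrix.mul_one, hu₂a]
        rw [hadj u₂, hblock₂ g, Matrix.fromBlocks_conjTranspose, Matrix.fromBlocks_multiply]
          at hbigu
        have hbigu' : Matrix.fromBlocks (σm g * (σm g)ᴴ) 0 0 (ρb₂ g * (ρb₂ g)ᴴ)
            = Matrix.fromBlocks 1 0 0 1 := by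
          rw [Matrix.fromBlocks_one]
          rw [← hbigu]
          congr 1 <;> simp
        have := congrArg Matrix.toBlocks₂₂ hbigu'
        simp only [Matrix.toBlocks_fromBlocks₂₂] at this
        rw [Matrix.mem_unitaryGroup_iff, Matrix.star_eq_conjTranspose]
        exact this
      have hmem₁ : ∀ g, ρb₁ g ∈ Matrix.unitaryGroup (Fin l) ℂ := by
        intro g
        have hbigu : (u₁ᴴ * (ρ₁ g : Matrix n n ℂ) * u₁) * (u₁ᴴ * ((ρ₁ g : Matrix n n ℂ))ᴴ * u₁)
            = 1 := by
          rw [hconjprod u₁ hu₁b]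
          have : (ρ₁ g : Matrix n n ℂ) * ((ρ₁ g : Matrix n n ℂ))ᴴ = 1 := by
            have := Matrix.mem_unitaryGroup_iff.mp (ρ₁ g).2
            rwa [Matrix.star_eq_conjTranspose] at this
          rw [this, Matrix.mul_one, hu₁a]
        rw [hadj u₁, hblock₁ g, Matrix.fromBlocks_conjTranspose, Matrix.fromBlocks_multiply]
          at hbigu
        have hbigu' : Matrix.fromBlocks (σm g * (σm g)ᴴ) 0 0 (ρb₁ g * (ρb₁ g)ᴴ)
            = Matrix.fromBlocks 1 0 0 1 := by
          rw [Matrix.fromBlocks_one]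
          rw [← hbigu]
          congr 1 <;> simp
        have := congrArg Matrix.toBlocks₂₂ hbigu'
        simp only [Matrix.toBlocks_fromBlocks₂₂] at this
        rw [Matrix.mem_unitaryGroup_iff, Matrix.star_eq_conjTranspose]
        exact this
      -- the block monoid homs
      set ρ₂' : G →* Matrix.unitaryGroup (Fin l) ℂ :=
        MonoidHom.mk' (fun g => ⟨ρb₂ g, hmem₂ g⟩)
          (fun g g' => Subtype.ext ((hmul₂ g g').2)) with hρ₂'
      set ρ₁' : G →* Matrix.unitaryGroup (Fin l) ℂ :=
        MonoidHom.mk' (fun g => ⟨ρb₁ g, hmem₁ g⟩)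
          (fun g g' => Subtype.ext (hmul₁ g g')) with hρ₁'
      -- traces of blocks agree
      have htrconj : ∀ (U : Matrix n (Fin k ⊕ Fin l) ℂ), U * Uᴴ = 1 →
          ∀ (M : Matrix n n ℂ), Matrix.trace (Uᴴ * M * U) = Matrix.trace M := by
        intro U hU M
        calc Matrix.trace ((Uᴴ * M) * U) = Matrix.trace (U * (Uᴴ * M)) :=
              Matrix.trace_mul_comm _ _
        _ = Matrix.trace ((U * Uᴴ) * M) := by rw [Matrix.mul_assoc]
        _ = Matrix.trace M := by rw [hU, Matrix.one_mul]
      have htrb : ∀ g, Matrix.trace (ρb₁ g) = Matrix.trace (ρb₂ g) := by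
        intro g
        have t₁ : Matrix.trace ((ρ₁ g : Matrix n n ℂ))
            = Matrix.trace (σm g) + Matrix.trace (ρb₁ g) := by
          rw [← htrconj u₁ hu₁b, hblock₁, trace_fromBlocks']
        have t₂ : Matrix.trace ((ρ₂ g : Matrix n n ℂ))
            = Matrix.trace (σm g) + Matrix.trace (ρb₂ g) := by
          rw [← htrconj u₂ hu₂b, hblock₂, trace_fromBlocks']
        have := h g
        rw [t₁, t₂] at this
        exact add_left_cancel this
      -- apply the induction hypothesis
      have hlle : Fintype.card (Fin l) ≤ N := by
        rw [Fintype.card_fin]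
        omega
      obtain ⟨q, hqmem, hq⟩ := ih (Fin l) hlle ρ₁' ρ₂' htrb
      have hq' : ∀ g, ρb₁ g = q * ρb₂ g * qᴴ := by
        intro g
        have := hq g
        rwa [Matrix.star_eq_conjTranspose] at this
      -- assemble the conjugating unitary
      set Bq : Matrix (Fin k ⊕ Fin l) (Fin k ⊕ Fin l) ℂ := Matrix.fromBlocks 1 0 0 q with hBq
      have hBH : Bqᴴ = Matrix.fromBlocks 1 0 0 qᴴ := by
        rw [hBq, Matrix.fromBlocks_conjTranspose]
        congr 1 <;> simp
      have hqq : q * qᴴ = 1 := by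
        have := Matrix.mem_unitaryGroup_iff.mp hqmem
        rwa [Matrix.star_eq_conjTranspose] at this
      have hqq' : qᴴ * q = 1 := by
        have := Matrix.mem_unitaryGroup_iff'.mp hqmem
        rwa [Matrix.star_eq_conjTranspose] at this
      have hBB : Bq * Bqᴴ = 1 := by
        rw [hBq, hBH, Matrix.fromBlocks_multiply]
        rw [← Matrix.fromBlocks_one]
        congr 1 <;> simp [hqq]
      have hBB' : Bqᴴ * Bq = 1 := by
        rw [hBq, hBH, Matrix.fromBlocks_multiply]
        rw [← Matrix.fromBlocks_one]
        congr 1 <;> simp [hqq']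
      set p : Matrix n n ℂ := u₁ * Bq * u₂ᴴ with hp
      have hpstar : star p = u₂ * Bqᴴ * u₁ᴴ := by
        rw [hp, Matrix.star_eq_conjTranspose, Matrix.conjTranspose_mul (u₁ * Bq) (u₂ᴴ),
          Matrix.conjTranspose_mul u₁ Bq, Matrix.conjTranspose_conjTranspose]
        simp only [Matrix.mul_assoc]
      have hpmem : p ∈ Matrix.unitaryGroup n ℂ := by
        rw [Matrix.mem_unitaryGroup_iff]
        rw [hpstar, hp]
        have h1 : u₁ * Bq * u₂ᴴ * (u₂ * Bqᴴ * u₁ᴴ)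
            = u₁ * Bq * (u₂ᴴ * u₂) * Bqᴴ * u₁ᴴ := by
          simp only [Matrix.mul_assoc]
        rw [h1, hu₂a, Matrix.mul_one]
        have h2 : u₁ * Bq * Bqᴴ * u₁ᴴ = u₁ * (Bq * Bqᴴ) * u₁ᴴ := by
          simp only [Matrix.mul_assoc]
        rw [h2, hBB, Matrix.mul_one, hu₁b]
      refine ⟨p, hpmem, fun g => ?_⟩
      -- the conjugation identity
      have hmid : Bq * (u₂ᴴ * (ρ₂ g : Matrix n n ℂ) * u₂) * Bqᴴ
          = u₁ᴴ * (ρ₁ g : Matrix n n ℂ) * u₁ := by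
        rw [hblock₂, hblock₁, hBq, hBH, Matrix.fromBlocks_multiply,
          Matrix.fromBlocks_multiply]
        simp only [Matrix.one_mul, Matrix.mul_one, Matrix.zero_mul, Matrix.mul_zero,
          add_zero, zero_add]
        congr 1
        rw [hq' g, Matrix.mul_assoc]
      have hfin : p * (ρ₂ g : Matrix n n ℂ) * star p = (ρ₁ g : Matrix n n ℂ) := by
        rw [hpstar, hp]
        have h1 : u₁ * Bq * u₂ᴴ * (ρ₂ g : Matrix n n ℂ) * (u₂ * Bqᴴ * u₁ᴴ)
            = u₁ * (Bq * (u₂ᴴ * (ρ₂ g : Matrix n n ℂ) * u₂) * Bqᴴ) * u₁ᴴ := by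
          simp only [Matrix.mul_assoc]
        rw [h1, hmid]
        have h2 : u₁ * (u₁ᴴ * (ρ₁ g : Matrix n n ℂ) * u₁) * u₁ᴴ
            = (u₁ * u₁ᴴ) * (ρ₁ g : Matrix n n ℂ) * (u₁ * u₁ᴴ) := by
          simp only [Matrix.mul_assoc]
        rw [h2, hu₁b, Matrix.one_mul, Matrix.mul_one]
      exact hfin.symm

end induction

/-- Two unitary representations of a monoid with equal characters are unitarily equivalent:
if `Tr ρ₁(g) = Tr ρ₂(g)` for all `g`, then there is a unitary `p` with
`ρ₁(g) = p ρ₂(g) p⁻¹` for all `g`. -/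
theorem unitary_conjugate_of_trace_eq {G : Type*} [Monoid G] (r : ℕ)
    (ρ₁ ρ₂ : G →* Matrix.unitaryGroup (Fin r) ℂ)
    (h : ∀ g : G, Matrix.trace ((ρ₁ g : Matrix (Fin r) (Fin r) ℂ)) =
      Matrix.trace ((ρ₂ g : Matrix (Fin r) (Fin r) ℂ))) :
    ∃ p : Matrix.unitaryGroup (Fin r) ℂ, ∀ g : G, ρ₁ g = p * ρ₂ g * p⁻¹ := by
  obtain ⟨p, hpmem, hp⟩ := conj_aux (Fintype.card (Fin r)) (Fin r) le_rfl ρ₁ ρ₂ h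
  refine ⟨⟨p, hpmem⟩, fun g => ?_⟩
  apply Subtype.ext
  show ((ρ₁ g : Matrix (Fin r) (Fin r) ℂ))
    = p * (ρ₂ g : Matrix (Fin r) (Fin r) ℂ) * star p
  exact hp g
end

section
/- Let G be a monoid and let ρ : G → U(2) be a monoid homomorphism into the group of 2×2 complex unitary matrices such that for every g ∈ G the matrix ρ(g) has 1 as an eigenvalue, i.e. there exists a nonzero vector v_g ∈ ℂ² with ρ(g) v_g = v_g. Then there exists a single nonzero vector v ∈ ℂ² such that ρ(g) v = v for all g ∈ G. -/
open Matrix Complex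

noncomputable section CommonFixedAux

local notation "conj'" => starRingEnd ℂ

private def nsq (u : Fin 2 → ℂ) : ℂ := u 0 * conj' (u 0) + u 1 * conj' (u 1)

private def fm (a : ℂ) (u : Fin 2 → ℂ) : Matrix (Fin 2) (Fin 2) ℂ :=
  a • (1 : Matrix (Fin 2) (Fin 2) ℂ) +
    ((1 - a) / nsq u) •
      Matrix.of ![![u 0 * conj' (u 0), u 0 * conj' (u 1)],
                  ![u 1 * conj' (u 0), u 1 * conj' (u 1)]]

private lemma nsq_ne_zero {u : Fin 2 → ℂ} (hu : u ≠ 0) : nsq u ≠ 0 := by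
  have h0 : nsq u = ((normSq (u 0) + normSq (u 1) : ℝ) : ℂ) := by
    simp [nsq, mul_conj]
  rw [h0]
  intro hc
  apply hu
  have : normSq (u 0) + normSq (u 1) = 0 := by exact_mod_cast hc
  have h1 : normSq (u 0) = 0 ∧ normSq (u 1) = 0 := by
    constructor <;> nlinarith [normSq_nonneg (u 0), normSq_nonneg (u 1)]
  funext i
  fin_cases i
  · exact normSq_eq_zero.mp h1.1
  · exact normSq_eq_zero.mp h1.2

private lemma fm_one (u : Fin 2 → ℂ) : fm 1 u = 1 := by
  simp [fm]

private lemma fix_structure (A : Matrix (Fin 2) (Fin 2) ℂ) (hU : star A * A = 1)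
    (u : Fin 2 → ℂ) (hu : u ≠ 0) (hAu : A *ᵥ u = u) : A = fm A.det u := by
  have hN : nsq u ≠ 0 := nsq_ne_zero hu
  have E1 : A 0 0 * u 0 + A 0 1 * u 1 = u 0 := by
    have := congrFun hAu 0
    simpa [Matrix.mulVec, dotProduct, Fin.sum_univ_two] using this
  have E2 : A 1 0 * u 0 + A 1 1 * u 1 = u 1 := by
    have := congrFun hAu 1
    simpa [Matrix.mulVec, dotProduct, Fin.sum_univ_two] using this
  have hstar : star A *ᵥ u = u := by
    conv_lhs => rw [← hAu]
    rw [mulVec_mulVec, hU, one_mulVec]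
  have E3' : conj' (A 0 0) * u 0 + conj' (A 1 0) * u 1 = u 0 := by
    have := congrFun hstar 0
    simpa [Matrix.mulVec, dotProduct, Fin.sum_univ_two, Matrix.star_apply,
      Complex.star_def] using this
  have E4' : conj' (A 0 1) * u 0 + conj' (A 1 1) * u 1 = u 1 := by
    have := congrFun hstar 1
    simpa [Matrix.mulVec, dotProduct, Fin.sum_univ_two, Matrix.star_apply,
      Complex.star_def] using this
  have E3 : A 0 0 * conj' (u 0) + A 1 0 * conj' (u 1) = conj' (u 0) := by
    have := congrArg conj' E3'
    simpa [map_add, _root_.map_mul] using this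
  have E4 : A 0 1 * conj' (u 0) + A 1 1 * conj' (u 1) = conj' (u 1) := by
    have := congrArg conj' E4'
    simpa [map_add, _root_.map_mul] using this
  have hker : (A - 1) *ᵥ u = 0 := by
    rw [Matrix.sub_mulVec, hAu, one_mulVec, sub_self]
  have E5 : (A 0 0 - 1) * (A 1 1 - 1) - A 0 1 * A 1 0 = 0 := by
    have hd : (A - 1).det = 0 := Matrix.exists_mulVec_eq_zero_iff.mp ⟨u, hu, hker⟩
    simpa [Matrix.det_fin_two, Matrix.sub_apply, Matrix.one_apply] using hd
  have hdet : A.det = A 0 0 * A 1 1 - A 0 1 * A 1 0 := Matrix.det_fin_two A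
  unfold nsq at hN
  ext i j
  fin_cases i <;> fin_cases j <;>
    simp only [fm, Matrix.add_apply, Matrix.smul_apply, Matrix.one_apply, Matrix.of_apply,
      Matrix.cons_val_zero, Matrix.cons_val_one, Matrix.head_cons, smul_eq_mul, hdet,
      if_true, if_false, Fin.zero_eta, Fin.mk_one, nsq, one_ne_zero, zero_ne_one, reduceCtorEq]
  · field_simp [hN]
    linear_combination (conj' (u 0)) * E1 - u 1 * conj' (u 1) * E5 - u 1 * E4
  · field_simp [hN]
    linear_combination u 0 * conj' (u 1) * E5 + u 0 * E4 + conj' (u 1) * E1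
  · field_simp [hN]
    linear_combination conj' (u 0) * E2 + u 1 * conj' (u 0) * E5 + u 1 * E3
  · field_simp [hN]
    linear_combination conj' (u 1) * E2 - u 0 * conj' (u 0) * E5 - u 0 * E3

private lemma key_det (a b : ℂ) (u w : Fin 2 → ℂ) (hu : u ≠ 0) (hw : w ≠ 0)
    (ha : a ≠ 1) (hb : b ≠ 1)
    (hd : ((fm a u) * (fm b w) - 1).det = 0) : u 0 * w 1 - u 1 * w 0 = 0 := by
  have hNu : nsq u ≠ 0 := nsq_ne_zero hu
  have hNw : nsq w ≠ 0 := nsq_ne_zero hw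
  unfold nsq at hNu hNw
  simp only [fm, nsq, Matrix.det_fin_two, Matrix.sub_apply, Matrix.add_apply,
    Matrix.smul_apply, Matrix.one_apply, Matrix.mul_apply, Fin.sum_univ_two,
    Matrix.of_apply, Matrix.cons_val_zero, Matrix.cons_val_one, Matrix.head_cons,
    smul_eq_mul, if_true, if_false, one_ne_zero, zero_ne_one, Fin.zero_eta, Fin.mk_one,
    reduceCtorEq] at hd
  field_simp [hNu, hNw] at hd
  have key : (1 - a) * (1 - b) *
      ((u 0 * w 1 - u 1 * w 0) * (conj' (u 0) * conj' (w 1) - conj' (u 1) * conj' (w 0))) *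
      ((u 0 * conj' (u 0) + u 1 * conj' (u 1)) * (w 0 * conj' (w 0) + w 1 * conj' (w 1))) = 0 := by
    linear_combination hd
  have h1a : (1 : ℂ) - a ≠ 0 := sub_ne_zero.mpr (Ne.symm ha)
  have h1b : (1 : ℂ) - b ≠ 0 := sub_ne_zero.mpr (Ne.symm hb)
  have h2 : (u 0 * w 1 - u 1 * w 0) *
      (conj' (u 0) * conj' (w 1) - conj' (u 1) * conj' (w 0)) = 0 := by
    rcases mul_eq_zero.mp key with h | h
    · rcases mul_eq_zero.mp h with h | h
      · rcases mul_eq_zero.mp h with h | h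
        · exact (h1a h).elim
        · exact (h1b h).elim
      · exact h
    · rcases mul_eq_zero.mp h with h | h
      · exact (hNu h).elim
      · exact (hNw h).elim
  rcases mul_eq_zero.mp h2 with h | h
  · exact h
  · have hc : conj' (u 0 * w 1 - u 1 * w 0) = 0 := by
      rw [map_sub, _root_.map_mul, _root_.map_mul]; exact h
    simpa using congrArg conj' hc

private lemma parallel_fix (B : Matrix (Fin 2) (Fin 2) ℂ) (u w : Fin 2 → ℂ)
    (hu : u ≠ 0) (hw : w ≠ 0) (hBw : B *ᵥ w = w)
    (he : u 0 * w 1 - u 1 * w 0 = 0) : B *ᵥ u = u := by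
  have hpar : ∃ l : ℂ, l ≠ 0 ∧ w = l • u := by
    have hcase : u 0 ≠ 0 ∨ u 1 ≠ 0 := by
      by_contra hc
      push_neg at hc
      exact hu (funext fun i => by fin_cases i <;> simp [hc.1, hc.2])
    rcases hcase with h0 | h1
    · refine ⟨w 0 / u 0, ?_, ?_⟩
      · intro hl
        rw [div_eq_zero_iff] at hl
        have hw0 : w 0 = 0 := hl.resolve_right h0
        have hw1 : w 1 = 0 := by
          have : u 0 * w 1 = 0 := by rw [sub_eq_zero] at he; rw [he, hw0, mul_zero]
          exact (mul_eq_zero.mp this).resolve_left h0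
        exact hw (funext fun i => by fin_cases i <;> simp [hw0, hw1])
      · funext i
        fin_cases i <;> simp only [Pi.smul_apply, smul_eq_mul, Fin.zero_eta, Fin.mk_one]
        · field_simp
        · field_simp
          linear_combination he
    · refine ⟨w 1 / u 1, ?_, ?_⟩
      · intro hl
        rw [div_eq_zero_iff] at hl
        have hw1 : w 1 = 0 := hl.resolve_right h1
        have hw0 : w 0 = 0 := by
          have : u 1 * w 0 = 0 := by rw [sub_eq_zero] at he; rw [← he, hw1, mul_zero]
          exact (mul_eq_zero.mp this).resolve_left h1
        exact hw (funext fun i => by fin_cases i <;> simp [hw0, hw1])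
      · funext i
        fin_cases i <;> simp only [Pi.smul_apply, smul_eq_mul, Fin.zero_eta, Fin.mk_one]
        · field_simp
          linear_combination -he
        · field_simp
  obtain ⟨l, hl0, hl⟩ := hpar
  rw [hl, mulVec_smul] at hBw
  exact smul_right_injective _ hl0 hBw
end CommonFixedAux

/-- If every matrix in the image of a monoid homomorphism `ρ : G → U(2)` fixes some nonzero
vector of `ℂ²`, then there is a single nonzero vector fixed by all of them. -/
theorem common_fixed_vector_of_unitary_rank_two {G : Type*} [Monoid G]
    (ρ : G →* Matrix.unitaryGroup (Fin 2) ℂ)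
    (h : ∀ g : G, ∃ v : Fin 2 → ℂ, v ≠ 0 ∧
      (ρ g : Matrix (Fin 2) (Fin 2) ℂ).mulVec v = v) :
    ∃ v : Fin 2 → ℂ, v ≠ 0 ∧ ∀ g : G, (ρ g : Matrix (Fin 2) (Fin 2) ℂ).mulVec v = v := by
  by_cases hall : ∀ g : G, ρ g = 1
  · refine ⟨![1, 0], ?_, fun g => ?_⟩
    · intro hc
      have := congrFun hc 0
      simp at this
    · rw [hall g]
      simp [Matrix.one_mulVec]
  · push_neg at hall
    obtain ⟨g₀, hg₀⟩ := hall
    obtain ⟨u, hu, hAu⟩ := h g₀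
    set A : Matrix (Fin 2) (Fin 2) ℂ := (ρ g₀ : Matrix (Fin 2) (Fin 2) ℂ) with hAdef
    have hUA : star A * A = 1 := (Unitary.mem_iff.mp (ρ g₀).2).1
    have hA := fix_structure A hUA u hu hAu
    have ha : A.det ≠ 1 := by
      intro h1
      apply hg₀
      have hA1 : A = 1 := by rw [hA, h1, fm_one]
      refine Subtype.coe_injective ?_
      show (ρ g₀ : Matrix (Fin 2) (Fin 2) ℂ) =
        ((1 : Matrix.unitaryGroup (Fin 2) ℂ) : Matrix (Fin 2) (Fin 2) ℂ)
      rw [← hAdef, hA1]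
      simp
    refine ⟨u, hu, fun g => ?_⟩
    obtain ⟨w, hw, hBw⟩ := h g
    set B : Matrix (Fin 2) (Fin 2) ℂ := (ρ g : Matrix (Fin 2) (Fin 2) ℂ) with hBdef
    have hUB : star B * B = 1 := (Unitary.mem_iff.mp (ρ g).2).1
    have hB := fix_structure B hUB w hw hBw
    by_cases hb : B.det = 1
    · have hB1 : B = 1 := by rw [hB, hb, fm_one]
      show B *ᵥ u = u
      rw [hB1, one_mulVec]
    · obtain ⟨x, hx, hCx⟩ := h (g₀ * g)
      have hABx : (A * B) *ᵥ x = x := by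
        have hco : ((ρ (g₀ * g) : Matrix (Fin 2) (Fin 2) ℂ)) = A * B := by
          rw [MonoidHom.map_mul]; rfl
        rwa [hco] at hCx
      have hker : (A * B - 1) *ᵥ x = 0 := by
        rw [Matrix.sub_mulVec, hABx, one_mulVec, sub_self]
      have hd : (A * B - 1).det = 0 := Matrix.exists_mulVec_eq_zero_iff.mp ⟨x, hx, hker⟩
      rw [hA, hB] at hd
      exact parallel_fix B u w hu hw hBw (key_det A.det B.det u w hu hw ha hb hd)
end

section
/- Let r ∈ ℕ, L ≥ 0, and let A, B : ℝ → M_r(ℂ) be continuous. Suppose U, V : ℝ → M_r(ℂ) satisfy U(0) = V(0) = 1, U'(t) = A(t)·U(t) and V'(t) = B(t)·V(t) for all t ∈ [0, L], and U(t) and V(t) are unitary matrices for every t ∈ [0, L]. Then ‖U(L)⁻¹·V(L) − 1‖ ≤ ∫₀^L ‖A(t) − B(t)‖ dt, where ‖·‖ is the operator norm on M_r(ℂ) induced by the Euclidean norm on ℂ^r. -/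
open scoped Matrix.Norms.L2Operator in
/-- Gronwall-type estimate for two unitary cocycles: if `U' = A·U` and `V' = B·V` on `[0, L]`
with `U(0) = V(0) = 1` and `U(t)`, `V(t)` unitary, then, in the `ℓ² → ℓ²` operator norm,
`‖U(L)⁻¹ V(L) − 1‖ ≤ ∫₀^L ‖A(t) − B(t)‖ dt`. -/
theorem dist_unitary_cocycles_le (r : ℕ) (L : ℝ) (hL : 0 ≤ L)
    (A B : ℝ → Matrix (Fin r) (Fin r) ℂ) (hA : Continuous A) (hB : Continuous B)
    (U V : ℝ → Matrix (Fin r) (Fin r) ℂ)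
    (hU0 : U 0 = 1) (hV0 : V 0 = 1)
    (hU : ∀ t ∈ Set.Icc (0 : ℝ) L, HasDerivAt U (A t * U t) t)
    (hV : ∀ t ∈ Set.Icc (0 : ℝ) L, HasDerivAt V (B t * V t) t)
    (hUu : ∀ t ∈ Set.Icc (0 : ℝ) L, U t ∈ Matrix.unitaryGroup (Fin r) ℂ)
    (hVu : ∀ t ∈ Set.Icc (0 : ℝ) L, V t ∈ Matrix.unitaryGroup (Fin r) ℂ) :
    ‖(U L)⁻¹ * V L - 1‖ ≤ ∫ t in (0 : ℝ)..L, ‖A t - B t‖ := by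
  rcases eq_or_lt_of_le hL with hL0 | hL0
  · subst hL0
    simp [hU0, hV0]
  -- A is skew-hermitian on [0, L]
  have hAskew : ∀ t ∈ Set.Icc (0 : ℝ) L, star (A t) + A t = 0 := by
    have hIoo : ∀ t ∈ Set.Ioo (0 : ℝ) L, star (A t) + A t = 0 := by
      intro t ht
      have htIcc : t ∈ Set.Icc (0 : ℝ) L := Set.Ioo_subset_Icc_self ht
      have hg : HasDerivAt (fun s => star (U s) * U s)
          (star (A t * U t) * U t + star (U t) * (A t * U t)) t :=
        ((hU t htIcc).star).mul (hU t htIcc)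
      have hg0 : HasDerivAt (fun s => star (U s) * U s) 0 t := by
        have hev : (fun s => star (U s) * U s) =ᶠ[nhds t] (fun _ => 1) := by
          filter_upwards [Ioo_mem_nhds ht.1 ht.2] with s hs
          exact (Matrix.mem_unitaryGroup_iff'.mp (hUu s (Set.Ioo_subset_Icc_self hs)))
        exact (hasDerivAt_const t (1 : Matrix (Fin r) (Fin r) ℂ)).congr_of_eventuallyEq hev
      have heq : star (A t * U t) * U t + star (U t) * (A t * U t) = 0 :=
        hg.unique hg0
      have h1 : star (U t) * U t = 1 := Matrix.mem_unitaryGroup_iff'.mp (hUu t htIcc)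
      have h2 : U t * star (U t) = 1 := Matrix.mem_unitaryGroup_iff.mp (hUu t htIcc)
      have : U t * (star (A t * U t) * U t + star (U t) * (A t * U t)) * star (U t)
          = star (A t) + A t := by
        rw [star_mul]
        calc U t * (star (U t) * star (A t) * U t + star (U t) * (A t * U t)) * star (U t)
            = (U t * star (U t)) * star (A t) * (U t * star (U t))
              + (U t * star (U t)) * A t * (U t * star (U t)) := by
              noncomm_ring
          _ = star (A t) + A t := by rw [h2]; noncomm_ring
      rw [heq] at this
      simpa using this.symm
    intro t ht
    have hcont : Continuous (fun t => star (A t) + A t) := (hA.star).add hA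
    have hclos : Set.EqOn (fun t => star (A t) + A t) (fun _ => 0) (closure (Set.Ioo 0 L)) :=
      Set.EqOn.closure (fun s hs => hIoo s hs) hcont continuous_const
    have := hclos (by rw [closure_Ioo hL0.ne]; exact ht)
    simpa using this
  -- the comparison function and its derivative
  set W : ℝ → Matrix (Fin r) (Fin r) ℂ := fun t => star (U t) * V t with hWdef
  set D : ℝ → Matrix (Fin r) (Fin r) ℂ := fun t => star (U t) * ((B t - A t) * V t) with hDdef
  have hW : ∀ t ∈ Set.Icc (0 : ℝ) L, HasDerivAt W (D t) t := by
    intro t ht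
    have h := ((hU t ht).star).mul (hV t ht)
    have hst : star (A t) = -A t := by
      have := hAskew t ht
      linear_combination (norm := noncomm_ring) this
    have : star (A t * U t) * V t + star (U t) * (B t * V t) = D t := by
      rw [star_mul, hst, hDdef]
      noncomm_ring
    rwa [this] at h
  -- continuity of relevant functions on [0, L]
  have hUc : ContinuousOn U (Set.Icc 0 L) := fun t ht => ((hU t ht).continuousAt).continuousWithinAt
  have hVc : ContinuousOn V (Set.Icc 0 L) := fun t ht => ((hV t ht).continuousAt).continuousWithinAt
  have hDc : ContinuousOn D (Set.Icc 0 L) :=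
    (hUc.star).mul (((hB.sub hA).continuousOn).mul hVc)
  have hDi : IntervalIntegrable D MeasureTheory.volume 0 L :=
    (hDc.mono (by rw [Set.uIcc_of_le hL])).intervalIntegrable
  -- fundamental theorem of calculus
  have hFTC : ∫ t in (0 : ℝ)..L, D t = W L - W 0 :=
    intervalIntegral.integral_eq_sub_of_hasDerivAt
      (fun t ht => hW t (by rwa [Set.uIcc_of_le hL] at ht)) hDi
  have hW0 : W 0 = 1 := by simp [hWdef, hU0, hV0]
  have hWL : (U L)⁻¹ * V L = W L := by
    have h1 : star (U L) * U L = 1 :=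
      Matrix.mem_unitaryGroup_iff'.mp (hUu L ⟨hL, le_rfl⟩)
    rw [hWdef, Matrix.inv_eq_left_inv h1]
  rw [hWL, ← hW0, ← hFTC]
  have hbound : ∀ᵐ t ∂MeasureTheory.volume.restrict (Set.uIoc (0:ℝ) L),
      ‖D t‖ ≤ ‖A t - B t‖ := by
    rw [Set.uIoc_of_le hL]
    refine (MeasureTheory.ae_restrict_iff' measurableSet_Ioc).mpr ?_
    filter_upwards with t ht
    have htIcc : t ∈ Set.Icc (0 : ℝ) L := Set.Ioc_subset_Icc_self ht
    have hstar : star (U t) ∈ unitary (Matrix (Fin r) (Fin r) ℂ) :=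
      Unitary.star_mem (hUu t htIcc)
    calc ‖D t‖ = ‖(B t - A t) * V t‖ := CStarRing.norm_mem_unitary_mul _ hstar
      _ = ‖B t - A t‖ := CStarRing.norm_mul_mem_unitary _ (hVu t htIcc)
      _ = ‖A t - B t‖ := norm_sub_rev _ _
      _ ≤ ‖A t - B t‖ := le_rfl
  rw [Set.uIoc_of_le hL] at hbound
  exact intervalIntegral.norm_integral_le_of_norm_le hL
    ((MeasureTheory.ae_restrict_iff' measurableSet_Ioc).mp hbound)
    ((hA.sub hB).norm.intervalIntegrable 0 L)
end
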